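/- arXiv:1708.06707 — 3 statements merged into one kernel-verified Lean document; each statement's English description precedes it below -/
import Mathlib

section
/- Let ω be a real-valued random variable whose distribution is symmetric about 0 (i.e., ω and -ω have the same law), and let δ > 0. Then E[exp(δω - (δ²/2)ω²)] ≤ 1. -/
open MeasureTheory

theorem symmetric_charge_single_site_bound
    {α : Type*} [MeasurableSpace α] (P : Measure α) [IsProbabilityMeasure P]
    (ω : α → ℝ) (hω : Measurable ω)
    (hsymm : Measure.map ω P = Measure.map (fun a => -ω a) P)
    (δ : ℝ) (hδ : 0 < δ)
    (hint : Integrable (fun a => Real.exp (δ * ω a - δ ^ 2 / 2 * (ω a) ^ 2)) P) :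
    ∫ a, Real.exp (δ * ω a - δ ^ 2 / 2 * (ω a) ^ 2) ∂P ≤ 1 := by
  set f : ℝ → ℝ := fun x => Real.exp (δ * x - δ ^ 2 / 2 * x ^ 2) with hf
  have hfc : Continuous f := by
    apply Real.continuous_exp.comp; continuity
  have hωneg : Measurable (fun a => -ω a) := hω.neg
  -- equality of integrals via pushforward
  have key : ∫ a, f (ω a) ∂P = ∫ a, f (-ω a) ∂P := by
    rw [← integral_map hω.aemeasurable hfc.aestronglyMeasurable,
      ← integral_map hωneg.aemeasurable hfc.aestronglyMeasurable, hsymm]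
  have hint' : Integrable (fun a => f (-ω a)) P := by
    have h1 : Integrable f (Measure.map ω P) :=
      (integrable_map_measure hfc.aestronglyMeasurable hω.aemeasurable).2 hint
    rw [hsymm] at h1
    exact (integrable_map_measure hfc.aestronglyMeasurable hωneg.aemeasurable).1 h1
  -- pointwise bound: f x + f (-x) ≤ 2
  have hpt : ∀ x : ℝ, f x + f (-x) ≤ 2 := by
    intro x
    have hc : Real.cosh (δ * x) ≤ Real.exp ((δ * x) ^ 2 / 2) :=
      Real.cosh_le_exp_half_sq (δ * x)
    have he : f x + f (-x)
        = Real.exp (-(δ ^ 2 / 2 * x ^ 2)) * (2 * Real.cosh (δ * x)) := by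
      simp only [hf, Real.cosh_eq, neg_sq, mul_neg]
      rw [show δ * x - δ ^ 2 / 2 * x ^ 2 = δ * x + -(δ ^ 2 / 2 * x ^ 2) by ring,
        show -(δ * x) - δ ^ 2 / 2 * x ^ 2 = -(δ * x) + -(δ ^ 2 / 2 * x ^ 2) by ring,
        Real.exp_add, Real.exp_add]
      ring
    rw [he]
    calc Real.exp (-(δ ^ 2 / 2 * x ^ 2)) * (2 * Real.cosh (δ * x))
        ≤ Real.exp (-(δ ^ 2 / 2 * x ^ 2)) * (2 * Real.exp ((δ * x) ^ 2 / 2)) := by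
          have := Real.exp_pos (-(δ ^ 2 / 2 * x ^ 2))
          nlinarith
      _ = 2 := by
          rw [← mul_assoc, mul_right_comm, ← Real.exp_add,
            show -(δ ^ 2 / 2 * x ^ 2) + (δ * x) ^ 2 / 2 = 0 by ring,
            Real.exp_zero, one_mul]
  have h2 : (2 : ℝ) * ∫ a, f (ω a) ∂P ≤ 2 := by
    have : (2 : ℝ) * ∫ a, f (ω a) ∂P = ∫ a, (f (ω a) + f (-ω a)) ∂P := by
      rw [integral_add hint hint', ← key]; ring
    rw [this]
    calc ∫ a, (f (ω a) + f (-ω a)) ∂P ≤ ∫ _a, (2 : ℝ) ∂P :=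
          integral_mono (hint.add hint') (integrable_const 2) fun a => hpt (ω a)
      _ = 2 := by simp
  linarith
end

section
/- Let Ω be a real random variable with E[Ω²] ≥ mℓ² + vℓ and E[Ω⁴] ≤ cℓ⁴ for constants m, v, c > 0 and ℓ ∈ ℕ. If β > 0 satisfies βℓ² ≤ a with ca ≤ η² for some η ∈ (0,1) with η² ≤ ηm, then E[exp(-βΩ²)] ≤ exp(-(βvℓ + (1-η)βmℓ²)). -/
open MeasureTheory

lemma exp_neg_le_quad {t : ℝ} (ht : 0 ≤ t) : Real.exp (-t) ≤ 1 - t + t ^ 2 := by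
  have h1 : Real.exp (-t) * (1 + t) ≤ 1 := by
    have h := Real.add_one_le_exp t
    have h2 : Real.exp (-t) * Real.exp t = 1 := by
      rw [← Real.exp_add]; simp
    nlinarith [Real.exp_pos (-t)]
  nlinarith [Real.exp_pos (-t)]

theorem single_site_upper_bound_small_occupation
    {α : Type*} [MeasurableSpace α] (P : Measure α) [IsProbabilityMeasure P]
    (Ω : α → ℝ) (hΩ : Measurable Ω)
    (ℓ : ℕ) (m v c a η β : ℝ)
    (hm : 0 < m) (hv : 0 < v) (hc : 0 < c) (hβ : 0 < β)
    (hη : η ∈ Set.Ioo (0 : ℝ) 1)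
    (hint2 : Integrable (fun x => (Ω x) ^ 2) P)
    (hint4 : Integrable (fun x => (Ω x) ^ 4) P)
    (hmom2 : ∫ x, (Ω x) ^ 2 ∂P ≥ m * (ℓ : ℝ) ^ 2 + v * ℓ)
    (hmom4 : ∫ x, (Ω x) ^ 4 ∂P ≤ c * (ℓ : ℝ) ^ 4)
    (ha : β * (ℓ : ℝ) ^ 2 ≤ a) (hca : c * a ≤ η ^ 2) (hηm : η ^ 2 ≤ η * m) :
    ∫ x, Real.exp (-β * (Ω x) ^ 2) ∂P
      ≤ Real.exp (-(β * v * ℓ + (1 - η) * β * m * (ℓ : ℝ) ^ 2)) := by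
  obtain ⟨hη0, hη1⟩ := hη
  have hintf : Integrable (fun x => Real.exp (-β * (Ω x) ^ 2)) P := by
    apply (integrable_const (1 : ℝ)).mono'
    · exact ((hΩ.pow_const 2).const_mul (-β)).exp.aestronglyMeasurable
    · filter_upwards with x
      rw [Real.norm_eq_abs, abs_of_pos (Real.exp_pos _)]
      rw [← Real.exp_zero]
      apply Real.exp_le_exp.mpr
      nlinarith [sq_nonneg (Ω x)]
  have hintg : Integrable (fun x => 1 - β * (Ω x) ^ 2 + β ^ 2 * (Ω x) ^ 4) P := by
    exact ((integrable_const 1).sub (hint2.const_mul β)).add (hint4.const_mul (β ^ 2))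
  have hmono : ∫ x, Real.exp (-β * (Ω x) ^ 2) ∂P
      ≤ ∫ x, (1 - β * (Ω x) ^ 2 + β ^ 2 * (Ω x) ^ 4) ∂P := by
    apply integral_mono hintf hintg
    intro x
    have h := exp_neg_le_quad (t := β * (Ω x) ^ 2) (by positivity)
    calc Real.exp (-β * (Ω x) ^ 2) = Real.exp (-(β * (Ω x) ^ 2)) := by ring_nf
      _ ≤ 1 - β * (Ω x) ^ 2 + (β * (Ω x) ^ 2) ^ 2 := h
      _ = 1 - β * (Ω x) ^ 2 + β ^ 2 * (Ω x) ^ 4 := by ring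
  have heval : ∫ x, (1 - β * (Ω x) ^ 2 + β ^ 2 * (Ω x) ^ 4) ∂P
      = 1 - β * ∫ x, (Ω x) ^ 2 ∂P + β ^ 2 * ∫ x, (Ω x) ^ 4 ∂P := by
    have h1 : Integrable (fun x => 1 - β * (Ω x) ^ 2) P :=
      (integrable_const 1).sub (hint2.const_mul β)
    rw [integral_add h1 (hint4.const_mul (β ^ 2)),
      integral_sub (integrable_const 1) (hint2.const_mul β),
      integral_const, integral_const_mul, integral_const_mul]
    simp
  have hℓ : (0 : ℝ) ≤ (ℓ : ℝ) := Nat.cast_nonneg ℓ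
  have key : β ^ 2 * (c * (ℓ : ℝ) ^ 4) ≤ η * (β * m * (ℓ : ℝ) ^ 2) := by
    have h1 : β ^ 2 * (c * (ℓ : ℝ) ^ 4) = (β * (ℓ : ℝ) ^ 2) * c * (β * (ℓ : ℝ) ^ 2) := by ring
    have hb2 : 0 ≤ β * (ℓ : ℝ) ^ 2 := by positivity
    nlinarith [mul_le_mul_of_nonneg_left ha hb2]
  have hfinal : ∫ x, Real.exp (-β * (Ω x) ^ 2) ∂P
      ≤ 1 + -(β * v * ℓ + (1 - η) * β * m * (ℓ : ℝ) ^ 2) := by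
    rw [heval] at hmono
    have h4 : β ^ 2 * ∫ x, (Ω x) ^ 4 ∂P ≤ β ^ 2 * (c * (ℓ : ℝ) ^ 4) :=
      mul_le_mul_of_nonneg_left hmom4 (by positivity)
    have h2 : β * (m * (ℓ : ℝ) ^ 2 + v * ℓ) ≤ β * ∫ x, (Ω x) ^ 2 ∂P :=
      mul_le_mul_of_nonneg_left hmom2 hβ.le
    nlinarith
  calc ∫ x, Real.exp (-β * (Ω x) ^ 2) ∂P
      ≤ 1 + -(β * v * ℓ + (1 - η) * β * m * (ℓ : ℝ) ^ 2) := hfinal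
    _ = -(β * v * ℓ + (1 - η) * β * m * (ℓ : ℝ) ^ 2) + 1 := by ring
    _ ≤ Real.exp (-(β * v * ℓ + (1 - η) * β * m * (ℓ : ℝ) ^ 2)) := Real.add_one_le_exp _
end

section
/- Let g : ℕ → (0, ∞) be such that log g is superadditive, i.e., g(m+n) ≥ g(m)·g(n) for all m, n ∈ ℕ. For a simple random walk S on ℤ^d with local times ℓ_n(x), define Z_n = E[∏_{x∈ℤ^d} g(ℓ_n(x))] (with the convention g(0) = 1). Then Z_{m+n} ≥ Z_m · Z_n for all m, n ∈ ℕ, and hence lim_{n→∞} (1/n) log Z_n exists in (-∞, ∞] and equals sup_n (1/n) log Z_n. -/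
open MeasureTheory ProbabilityTheory Finset Filter

private lemma fekete_chain {u : ℕ → ℝ}
    (hs : ∀ m n : ℕ, 1 ≤ m → 1 ≤ n → u m + u n ≤ u (m + n))
    (m : ℕ) (hm : 1 ≤ m) :
    ∀ q : ℕ, 1 ≤ q → ∀ r : ℕ, 1 ≤ r → (q : ℝ) * u m + u r ≤ u (q * m + r) := by
  intro q hq
  induction q, hq using Nat.le_induction with
  | base => intro r hr; simpa using hs m r hm hr
  | succ q hq ih =>
      intro r hr
      have h0 : 1 ≤ q * m + r := le_trans hr (Nat.le_add_left r (q * m))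
      have h1 : u m + u (q * m + r) ≤ u (m + (q * m + r)) := hs m (q * m + r) hm h0
      have h2 : (q : ℝ) * u m + u r ≤ u (q * m + r) := ih r hr
      have h3 : (q + 1) * m + r = m + (q * m + r) := by ring
      rw [h3]; push_cast; linarith

private lemma fekete_event {u : ℕ → ℝ}
    (hs : ∀ m n : ℕ, 1 ≤ m → 1 ≤ n → u m + u n ≤ u (m + n))
    (m : ℕ) (hm : 1 ≤ m) (c : ℝ) (hc : c < u m / m) :
    ∀ᶠ n : ℕ in atTop, c < 1 / (n : ℝ) * u n := by
  set v := u m / m with hv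
  set C := ∑ r ∈ Finset.Icc 1 m, |u r| with hC
  have hCr : ∀ r, 1 ≤ r → r ≤ m → -C ≤ u r := by
    intro r h1 h2
    have h3 : |u r| ≤ C :=
      Finset.single_le_sum (f := fun r => |u r|) (fun i _ => abs_nonneg _)
        (Finset.mem_Icc.mpr ⟨h1, h2⟩)
    have h4 := neg_abs_le (u r)
    linarith
  have hten : Tendsto (fun n : ℕ => ((m : ℝ) * |v| + C) / n) atTop (nhds 0) :=
    tendsto_const_div_atTop_nhds_zero_nat _
  have hev : ∀ᶠ n : ℕ in atTop, ((m : ℝ) * |v| + C) / n < v - c :=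
    hten.eventually (gt_mem_nhds (by linarith : (0:ℝ) < v - c))
  filter_upwards [hev, eventually_ge_atTop (m + 1)] with n h1 h2
  have hm0 : (0:ℝ) < m := by exact_mod_cast hm
  have hn0 : (0:ℝ) < n := by
    have : 1 ≤ n := by omega
    exact_mod_cast this
  set q := (n - 1) / m with hq
  set s := (n - 1) % m with hsdef
  have hmm : m * q + s = n - 1 := Nat.div_add_mod (n - 1) m
  have hsm : s < m := Nat.mod_lt _ (by omega)
  have hq1 : 1 ≤ q := by
    rcases Nat.eq_zero_or_pos q with h | h
    · exfalso; rw [h, mul_zero] at hmm; omega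
    · exact h
  have hns : q * m + (s + 1) = n := by
    have h3 : n - 1 + 1 = n := Nat.succ_pred_eq_of_pos (show 0 < n by omega)
    calc q * m + (s + 1) = m * q + s + 1 := by ring
    _ = n - 1 + 1 := by rw [hmm]
    _ = n := h3
  have e1 : (q : ℝ) * u m + u (s + 1) ≤ u n := by
    have := fekete_chain hs m hm q hq1 (s + 1) (by omega)
    rwa [hns] at this
  have e3 : (q : ℝ) * m = n - (s + 1) := by
    have : ((q * m + (s + 1) : ℕ) : ℝ) = n := by exact_mod_cast congrArg (Nat.cast : ℕ → ℝ) hns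
    push_cast at this
    linarith
  have e2 : (q : ℝ) * u m = ((q : ℝ) * m) * v := by
    rw [hv]; field_simp
  have e4a : (1 : ℝ) ≤ (s + 1 : ℕ) := by exact_mod_cast Nat.one_le_iff_ne_zero.mpr (by omega)
  have e4b : ((s + 1 : ℕ) : ℝ) ≤ m := by exact_mod_cast hsm
  have e5 : -C ≤ u (s + 1) := hCr (s + 1) (by omega) (by omega)
  have e6 : ((s + 1 : ℕ) : ℝ) * v ≤ m * |v| := by
    calc ((s + 1 : ℕ) : ℝ) * v ≤ ((s + 1 : ℕ) : ℝ) * |v| := by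
          exact mul_le_mul_of_nonneg_left (le_abs_self v) (by linarith)
    _ ≤ m * |v| := mul_le_mul_of_nonneg_right e4b (abs_nonneg v)
  have e7 : (n : ℝ) * v - m * |v| - C ≤ u n := by
    have : ((q : ℝ) * m) * v = n * v - ((s + 1 : ℕ) : ℝ) * v := by rw [e3]; push_cast; ring
    nlinarith
  have h1' : (m : ℝ) * |v| + C < (v - c) * n := (div_lt_iff₀ hn0).mp h1
  rw [show (1 / (n : ℝ)) * u n = u n / n by ring]
  rw [lt_div_iff₀ hn0]
  nlinarith

private lemma fekete_tendsto {u : ℕ → ℝ}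
    (hs : ∀ m n : ℕ, 1 ≤ m → 1 ≤ n → u m + u n ≤ u (m + n)) :
    Tendsto (fun n : ℕ => ((1 / (n : ℝ) * u n : ℝ) : EReal)) atTop
      (nhds (⨆ n : ℕ, ((1 / ((n : ℝ) + 1) * u (n + 1) : ℝ) : EReal))) := by
  set L := ⨆ n : ℕ, ((1 / ((n : ℝ) + 1) * u (n + 1) : ℝ) : EReal) with hL
  have hterm : ∀ n : ℕ, 1 ≤ n → ((1 / (n : ℝ) * u n : ℝ) : EReal) ≤ L := by
    intro n hn
    obtain ⟨k, rfl⟩ : ∃ k, n = k + 1 := ⟨n - 1, by omega⟩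
    rw [hL]
    have : ((1 / ((k + 1 : ℕ) : ℝ) * u (k + 1) : ℝ) : EReal)
        = ((1 / ((k : ℝ) + 1) * u (k + 1) : ℝ) : EReal) := by push_cast; ring_nf
    rw [this]
    exact le_iSup (fun n : ℕ => ((1 / ((n : ℝ) + 1) * u (n + 1) : ℝ) : EReal)) k
  rw [tendsto_order]
  constructor
  · intro c hc
    obtain ⟨k, hk⟩ := lt_iSup_iff.mp hc
    obtain ⟨x, hcx, hxk⟩ := EReal.exists_between_coe_real hk
    have hxv : x < u (k + 1) / ((k + 1 : ℕ) : ℝ) := by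
      have : x < 1 / ((k : ℝ) + 1) * u (k + 1) := by exact_mod_cast hxk
      push_cast
      rw [div_eq_inv_mul, ← one_div]
      linarith
    have hev := fekete_event hs (k + 1) (by omega) x hxv
    filter_upwards [hev] with n hn
    exact lt_trans hcx (by exact_mod_cast hn)
  · intro c hc
    filter_upwards [eventually_ge_atTop 1] with n hn
    exact lt_of_le_of_lt (hterm n hn) hc

private lemma card_fin_filter_aux {E : Type*} [DecidableEq E] (n : ℕ) (s : ℕ → E) (y : E) :
    (Finset.univ.filter fun i : Fin (n + 1) => s i.1 = y ∧ 1 ≤ i.1).card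
      = ((Finset.Icc 1 n).filter fun i => s i = y).card := by
  apply Finset.card_bij (fun i _ => i.1)
  · intro i hi
    simp only [Finset.mem_filter, Finset.mem_univ, true_and] at hi
    simp only [Finset.mem_filter, Finset.mem_Icc]
    exact ⟨⟨hi.2, Nat.lt_succ_iff.mp i.2⟩, hi.1⟩
  · intro i _ j _ hij; exact Fin.ext hij
  · intro j hj
    simp only [Finset.mem_filter, Finset.mem_Icc] at hj
    exact ⟨⟨j, Nat.lt_succ_of_le hj.1.2⟩, by simp [hj.2, hj.1.1], rfl⟩

private lemma supp_subset {E : Type*} [DecidableEq E] (g : ℕ → ℝ) (hg0 : g 0 = 1)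
    (t : Finset ℕ) (s : ℕ → E) :
    Function.mulSupport (fun x : E => g ((t.filter fun i => s i = x).card)) ⊆ ↑(t.image s) := by
  intro x hx
  rw [Function.mem_mulSupport] at hx
  have hne : (t.filter fun i => s i = x).card ≠ 0 := fun hcard => hx (by rw [hcard, hg0])
  obtain ⟨i, hi⟩ := Finset.card_ne_zero.mp hne
  rw [Finset.mem_filter] at hi
  simp only [Finset.coe_image, Set.mem_image, Finset.mem_coe]
  exact ⟨i, hi.1, hi.2⟩

private lemma pointwise_ineq {E : Type*} [DecidableEq E] [AddCommGroup E]
    (g : ℕ → ℝ) (hgpos : ∀ n, 0 < g n) (hg0 : g 0 = 1)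
    (hsuper : ∀ m n : ℕ, g (m + n) ≥ g m * g n)
    (m n : ℕ) (s : ℕ → E) :
    (∏ᶠ x : E, g (((Finset.Icc 1 m).filter fun i => s i = x).card)) *
      (∏ᶠ y : E, g (((Finset.Icc 1 n).filter fun j => s (m + j) - s m = y).card))
      ≤ ∏ᶠ x : E, g (((Finset.Icc 1 (m + n)).filter fun i => s i = x).card) := by
  set lt : E → ℕ := fun y => ((Finset.Icc 1 n).filter fun j => s (m + j) - s m = y).card with hlt
  set A : Finset E := (Finset.Icc 1 (m + n)).image s
      ∪ (Finset.Icc 1 n).image (fun j => s (m + j) - s m) with hA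
  -- the additive decomposition of local times
  have hdisj : Disjoint (Finset.Icc 1 m) (Finset.Ioc m (m + n)) := by
    simp only [Finset.disjoint_left, Finset.mem_Icc, Finset.mem_Ioc]; omega
  have hunion : Finset.Icc 1 m ∪ Finset.Ioc m (m + n) = Finset.Icc 1 (m + n) := by
    rw [show Finset.Icc 1 m = Finset.Ioc 0 m from Finset.Icc_add_one_left_eq_Ioc 0 m,
      show Finset.Icc 1 (m + n) = Finset.Ioc 0 (m + n) from Finset.Icc_add_one_left_eq_Ioc 0 (m + n)]
    exact Ioc_union_Ioc_eq_Ioc (Nat.zero_le m) (Nat.le_add_right m n)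
  have hIoc : Finset.Ioc m (m + n) = Finset.map (addLeftEmbedding m) (Finset.Icc 1 n) := by
    rw [map_add_left_Icc]
    exact (Finset.Icc_add_one_left_eq_Ioc m (m + n)).symm
  have cardid : ∀ x : E, ((Finset.Icc 1 (m + n)).filter fun i => s i = x).card
      = ((Finset.Icc 1 m).filter fun i => s i = x).card + lt (x - s m) := by
    intro x
    rw [← hunion, Finset.filter_union,
      Finset.card_union_of_disjoint (Finset.disjoint_filter_filter hdisj)]
    congr 1
    rw [hIoc, Finset.filter_map, Finset.card_map, hlt]
    congr 1
    apply Finset.filter_congr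
    intro j hj
    simp only [Function.comp, addLeftEmbedding_apply, sub_left_inj]
  -- support inclusions
  have hsupp_big : Function.mulSupport
      (fun x : E => g (((Finset.Icc 1 (m + n)).filter fun i => s i = x).card)) ⊆ ↑A := by
    refine subset_trans (supp_subset g hg0 _ s) ?_
    exact_mod_cast Finset.subset_union_left
  have hsupp_f : Function.mulSupport
      (fun x : E => g (((Finset.Icc 1 m).filter fun i => s i = x).card)) ⊆ ↑A := by
    refine subset_trans (supp_subset g hg0 _ s) ?_
    intro x hx
    simp only [Finset.coe_image, Set.mem_image, Finset.mem_coe] at hx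
    obtain ⟨i, hi, rfl⟩ := hx
    rw [hA]
    simp only [Finset.coe_union, Set.mem_union, Finset.coe_image, Set.mem_image, Finset.mem_coe]
    exact Or.inl ⟨i, Finset.mem_Icc.mpr ⟨(Finset.mem_Icc.mp hi).1,
      le_trans (Finset.mem_Icc.mp hi).2 (Nat.le_add_right m n)⟩, rfl⟩
  have hsupp_lt : Function.mulSupport (fun y : E => g (lt y)) ⊆ ↑A := by
    refine subset_trans ?_ (?_ : ↑((Finset.Icc 1 n).image fun j => s (m + j) - s m) ⊆ ↑A)
    · rw [hlt]; exact supp_subset g hg0 _ _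
    · rw [hA]; exact_mod_cast Finset.subset_union_right
  have hsupp_lt' : Function.mulSupport (fun x : E => g (lt (x - s m))) ⊆ ↑A := by
    intro x hx
    rw [Function.mem_mulSupport] at hx
    have hne : lt (x - s m) ≠ 0 := fun hcard => hx (by rw [hcard, hg0])
    rw [hlt] at hne
    obtain ⟨j, hj⟩ := Finset.card_ne_zero.mp hne
    rw [Finset.mem_filter] at hj
    have hsx : s (m + j) = x := by
      have := hj.2
      rwa [sub_left_inj] at this
    rw [hA]
    simp only [Finset.coe_union, Set.mem_union, Finset.coe_image, Set.mem_image, Finset.mem_coe]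
    refine Or.inl ⟨m + j, Finset.mem_Icc.mpr ?_, hsx⟩
    have := Finset.mem_Icc.mp hj.1
    omega
  -- rewrite all finprods as products over A
  have h1 : ∏ᶠ x : E, g (((Finset.Icc 1 (m + n)).filter fun i => s i = x).card)
      = ∏ x ∈ A, g (((Finset.Icc 1 (m + n)).filter fun i => s i = x).card) :=
    finprod_eq_prod_of_mulSupport_subset _ hsupp_big
  have h2 : ∏ᶠ x : E, g (((Finset.Icc 1 m).filter fun i => s i = x).card)
      = ∏ x ∈ A, g (((Finset.Icc 1 m).filter fun i => s i = x).card) :=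
    finprod_eq_prod_of_mulSupport_subset _ hsupp_f
  have h3 : ∏ᶠ y : E, g (lt y) = ∏ x ∈ A, g (lt (x - s m)) := by
    have e1 : ∏ᶠ y : E, g (lt y) = ∏ᶠ x : E, g (lt (x - s m)) := by
      rw [← finprod_comp_equiv (Equiv.subRight (s m)) (f := fun y => g (lt y))]
      exact finprod_congr fun x => by simp [Equiv.subRight_apply]
    rw [e1]
    exact finprod_eq_prod_of_mulSupport_subset _ hsupp_lt'
  rw [h1, h2]
  have h3' : (∏ᶠ y : E, g (((Finset.Icc 1 n).filter fun j => s (m + j) - s m = y).card))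
      = ∏ x ∈ A, g (lt (x - s m)) := h3
  rw [h3', ← Finset.prod_mul_distrib]
  refine Finset.prod_le_prod (fun x _ => (mul_pos (hgpos _) (hgpos _)).le) (fun x _ => ?_)
  rw [cardid x]
  exact hsuper _ _

theorem supermultiplicative_annealed_partition_function
    {α : Type*} [MeasurableSpace α] (P : Measure α) [IsProbabilityMeasure P]
    (d : ℕ) (S : ℕ → α → (Fin d → ℤ))
    (hmeas : ∀ i, Measurable (S i))
    (hshift : ∀ m : ℕ,
      Measure.map (fun a => fun i : ℕ => S (m + i) a - S m a) P
        = Measure.map (fun a => fun i : ℕ => S i a) P)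
    (hindep : ∀ m : ℕ,
      IndepFun (fun a => fun i : Fin (m + 1) => S i a)
        (fun a => fun i : ℕ => S (m + i) a - S m a) P)
    (g : ℕ → ℝ) (hgpos : ∀ n, 0 < g n) (hg0 : g 0 = 1)
    (hsuper : ∀ m n : ℕ, g (m + n) ≥ g m * g n)
    -- local times
    (ℓ : ℕ → (Fin d → ℤ) → α → ℕ)
    (hℓ : ∀ n x a, ℓ n x a = ((Finset.Icc 1 n).filter fun i => S i a = x).card)
    (Z : ℕ → ℝ)
    (hZ : ∀ n, Z n = ∫ a, ∏ᶠ x : Fin d → ℤ, g (ℓ n x a) ∂P)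
    (hint : ∀ n, Integrable (fun a => ∏ᶠ x : Fin d → ℤ, g (ℓ n x a)) P) :
    (∀ m n : ℕ, 1 ≤ m → 1 ≤ n → Z (m + n) ≥ Z m * Z n) ∧
    Tendsto (fun n : ℕ => ((1 / (n : ℝ) * Real.log (Z n) : ℝ) : EReal)) atTop
      (nhds (⨆ n : ℕ, ((1 / ((n : ℝ) + 1) * Real.log (Z (n + 1)) : ℝ) : EReal))) := by
  have hZpos : ∀ n, 0 < Z n := by
    intro n
    have fpos : ∀ a : α, 0 < ∏ᶠ x : Fin d → ℤ, g (ℓ n x a) := by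
      intro a
      have heq : (fun x : Fin d → ℤ => g (ℓ n x a))
          = fun x => g (((Finset.Icc 1 n).filter fun i => S i a = x).card) := by
        funext x; rw [hℓ]
      have hss : Function.mulSupport (fun x : Fin d → ℤ => g (ℓ n x a))
          ⊆ ↑((Finset.Icc 1 n).image fun i => S i a) := by
        rw [heq]; exact supp_subset g hg0 _ _
      rw [finprod_eq_prod_of_mulSupport_subset _ hss]
      exact Finset.prod_pos fun _ _ => hgpos _
    rw [hZ]
    refine (integral_pos_iff_support_of_nonneg (fun a => (fpos a).le) (hint n)).mpr ?_
    have hsu : Function.support (fun a => ∏ᶠ x : Fin d → ℤ, g (ℓ n x a)) = Set.univ :=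
      Set.eq_univ_of_forall fun a => (fpos a).ne'
    rw [hsu]
    simp
  have part1 : ∀ m n : ℕ, 1 ≤ m → 1 ≤ n → Z (m + n) ≥ Z m * Z n := by
    intro m n hm hn
    set ψ : (ℕ → (Fin d → ℤ)) → ℝ :=
      fun s => ∏ᶠ y : Fin d → ℤ, g (((Finset.Icc 1 n).filter fun i => s i = y).card)
      with hψdef
    set Φ : (Fin (m + 1) → (Fin d → ℤ)) → ℝ :=
      fun t => ∏ᶠ x : Fin d → ℤ,
        g ((Finset.univ.filter fun i : Fin (m + 1) => t i = x ∧ 1 ≤ i.1).card)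
      with hΦdef
    have hψmeas : Measurable ψ := by
      have heq : ψ = (fun t : Fin (n + 1) → (Fin d → ℤ) =>
            ∏ᶠ y : Fin d → ℤ,
              g ((Finset.univ.filter fun i : Fin (n + 1) => t i = y ∧ 1 ≤ i.1).card))
          ∘ (fun s => fun i : Fin (n + 1) => s i.1) := by
        funext s
        simp only [hψdef, Function.comp_apply]
        exact (finprod_congr fun y => congrArg g (card_fin_filter_aux n s y)).symm
      rw [heq]
      exact (measurable_of_countable _).comp
        (measurable_pi_lambda _ fun i => measurable_pi_apply i.1)
    have hYmeas : Measurable (fun a => fun i : ℕ => S (m + i) a - S m a) :=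
      measurable_pi_lambda _ fun i =>
        (measurable_of_countable fun p : (Fin d → ℤ) × (Fin d → ℤ) => p.1 - p.2).comp
          ((hmeas (m + i)).prodMk (hmeas m))
    have hWmeas : Measurable (fun a => fun i : ℕ => S i a) :=
      measurable_pi_lambda _ fun i => hmeas i
    have hcompW : (fun a => ψ (fun i : ℕ => S i a))
        = fun a => ∏ᶠ x : Fin d → ℤ, g (ℓ n x a) := by
      funext a
      simp only [hψdef]
      exact finprod_congr fun y => by rw [hℓ]
    have hinth : Integrable (fun a => ψ (fun i : ℕ => S (m + i) a - S m a)) P := by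
      have h1 : Integrable (ψ ∘ fun a => fun i : ℕ => S i a) P := by
        have : (ψ ∘ fun a => fun i : ℕ => S i a) = fun a => ψ (fun i : ℕ => S i a) := rfl
        rw [this, hcompW]; exact hint n
      have h2 : Integrable ψ (Measure.map (fun a => fun i : ℕ => S i a) P) :=
        (integrable_map_measure hψmeas.aestronglyMeasurable hWmeas.aemeasurable).mpr h1
      have h3 : Integrable ψ (Measure.map (fun a => fun i : ℕ => S (m + i) a - S m a) P) := by
        rw [hshift m]; exact h2
      exact (integrable_map_measure hψmeas.aestronglyMeasurable hYmeas.aemeasurable).mp h3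
    have hIh : ∫ a, ψ (fun i : ℕ => S (m + i) a - S m a) ∂P = Z n := by
      calc ∫ a, ψ (fun i : ℕ => S (m + i) a - S m a) ∂P
          = ∫ s, ψ s ∂(Measure.map (fun a => fun i : ℕ => S (m + i) a - S m a) P) :=
            (integral_map hYmeas.aemeasurable hψmeas.aestronglyMeasurable).symm
        _ = ∫ s, ψ s ∂(Measure.map (fun a => fun i : ℕ => S i a) P) := by rw [hshift m]
        _ = ∫ a, ψ (fun i : ℕ => S i a) ∂P :=
            integral_map hWmeas.aemeasurable hψmeas.aestronglyMeasurable
        _ = Z n := by rw [hcompW, hZ n]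
    have hfΦ : (Φ ∘ fun a => fun i : Fin (m + 1) => S (↑i) a)
        = fun a => ∏ᶠ x : Fin d → ℤ, g (ℓ m x a) := by
      funext a
      simp only [hΦdef, Function.comp_apply]
      exact finprod_congr fun x => by
        rw [hℓ, card_fin_filter_aux m (fun k => S k a) x]
    have hindfh : IndepFun (fun a => ∏ᶠ x : Fin d → ℤ, g (ℓ m x a))
        (fun a => ψ (fun i : ℕ => S (m + i) a - S m a)) P := by
      have h0 := (hindep m).comp (measurable_of_countable Φ) hψmeas
      rw [hfΦ] at h0
      exact h0
    have hintf : Integrable (fun a => ∏ᶠ x : Fin d → ℤ, g (ℓ m x a)) P := hint m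
    have hmulint : Integrable (fun a =>
        (∏ᶠ x : Fin d → ℤ, g (ℓ m x a)) * ψ (fun i : ℕ => S (m + i) a - S m a)) P := by
      have := hindfh.integrable_mul hintf hinth
      exact this
    have hmul : ∫ a, (∏ᶠ x : Fin d → ℤ, g (ℓ m x a))
        * ψ (fun i : ℕ => S (m + i) a - S m a) ∂P = Z m * Z n := by
      have h0 := hindfh.integral_mul_eq_mul_integral hintf.aestronglyMeasurable hinth.aestronglyMeasurable
      have hfh : ((fun a => ∏ᶠ x : Fin d → ℤ, g (ℓ m x a))
            * fun a => ψ (fun i : ℕ => S (m + i) a - S m a))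
          = fun a => (∏ᶠ x : Fin d → ℤ, g (ℓ m x a))
            * ψ (fun i : ℕ => S (m + i) a - S m a) := rfl
      rw [hfh] at h0
      rw [h0, hIh, hZ m]
    have hpt : ∀ a, (∏ᶠ x : Fin d → ℤ, g (ℓ m x a))
        * ψ (fun i : ℕ => S (m + i) a - S m a)
        ≤ ∏ᶠ x : Fin d → ℤ, g (ℓ (m + n) x a) := by
      intro a
      have eA : ∏ᶠ x : Fin d → ℤ, g (ℓ m x a)
          = ∏ᶠ x : Fin d → ℤ, g (((Finset.Icc 1 m).filter fun i => S i a = x).card) :=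
        finprod_congr fun x => by rw [hℓ]
      have eB : ψ (fun i : ℕ => S (m + i) a - S m a)
          = ∏ᶠ y : Fin d → ℤ,
              g (((Finset.Icc 1 n).filter fun j => S (m + j) a - S m a = y).card) := by
        simp only [hψdef]
      have eC : ∏ᶠ x : Fin d → ℤ, g (ℓ (m + n) x a)
          = ∏ᶠ x : Fin d → ℤ, g (((Finset.Icc 1 (m + n)).filter fun i => S i a = x).card) :=
        finprod_congr fun x => by rw [hℓ]
      rw [eA, eB, eC]
      exact pointwise_ineq g hgpos hg0 hsuper m n (fun i => S i a)
    calc Z m * Z n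
        = ∫ a, (∏ᶠ x : Fin d → ℤ, g (ℓ m x a))
            * ψ (fun i : ℕ => S (m + i) a - S m a) ∂P := hmul.symm
      _ ≤ ∫ a, ∏ᶠ x : Fin d → ℤ, g (ℓ (m + n) x a) ∂P :=
          integral_mono hmulint (hint (m + n)) hpt
      _ = Z (m + n) := (hZ (m + n)).symm
  have hu : ∀ m' n' : ℕ, 1 ≤ m' → 1 ≤ n' →
      Real.log (Z m') + Real.log (Z n') ≤ Real.log (Z (m' + n')) := by
    intro m' n' hm hn
    rw [← Real.log_mul (hZpos m').ne' (hZpos n').ne']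
    exact Real.log_le_log (mul_pos (hZpos m') (hZpos n')) (part1 m' n' hm hn)
  exact ⟨part1, fekete_tendsto hu⟩
end
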